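/- Let (M,ρ) be a complete metric space and let f, g : M → ℝ be Lipschitz functions such that f is bounded below and |∇̃f|(x) ≥ |∇̃g|(x) for all x ∈ M. Then for every ε > 0, inf_M (f - g) = inf { f(x) - g(x) : x ∈ ε-Crit f }. -/

import Mathlib

open Filter Topology ENNReal

/-- The positive part `[x]⁺` of an extended real, as an element of `ℝ≥0∞`. -/
noncomputable def erealPos (x : EReal) : ℝ≥0∞ := if x = ⊤ then ⊤ else ENNReal.ofReal x.toReal

/-- The global slope `|∇̃ f|(x) = sup_{y ≠ x} [f x - f y]⁺ / ρ(x,y)` of `f : M → ℝ ∪ {+∞}`. -/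
noncomputable def globalSlope {M : Type*} [MetricSpace M] (f : M → EReal) (x : M) : ℝ≥0∞ :=
  ⨆ y ∈ {y : M | y ≠ x}, erealPos (f x - f y) / edist x y

/-- The local slope `|∇ f|(x) = limsup_{y → x, y ≠ x} [f x - f y]⁺ / ρ(x,y)`. -/
noncomputable def localSlope {M : Type*} [MetricSpace M] (f : M → EReal) (x : M) : ℝ≥0∞ :=
  Filter.limsup (fun y => erealPos (f x - f y) / edist x y) (𝓝[≠] x)

/-- `ε`-global-critical points: `x ∈ dom f` with `f y ≥ f x - ε·ρ(y,x)` for all `y`. -/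
def epsCrit {M : Type*} [MetricSpace M] (ε : ℝ) (f : M → EReal) : Set M :=
  {x | f x ≠ ⊤ ∧ ∀ y, f x - ↑(ε * dist y x) ≤ f y}

section Aux
variable {M : Type*} [MetricSpace M]

lemma slope_coe (f : M → ℝ) (x : M) :
    globalSlope (fun t => (f t : EReal)) x
      = ⨆ y ∈ {y : M | y ≠ x}, ENNReal.ofReal (f x - f y) / edist x y := by
  unfold globalSlope
  refine iSup_congr fun y => iSup_congr fun hy => ?_
  rw [← EReal.coe_sub]
  simp only [erealPos, EReal.coe_ne_top, if_false, EReal.toReal_coe]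

lemma slope_le_of_forall (f : M → ℝ) (x : M) (r : ℝ) (hr : 0 ≤ r)
    (h : ∀ y, f x - f y ≤ r * dist x y) :
    globalSlope (fun t => (f t : EReal)) x ≤ ENNReal.ofReal r := by
  rw [slope_coe]
  refine iSup₂_le fun y hy => ?_
  have hd : (0:ℝ) < dist x y := dist_pos.2 (Ne.symm hy)
  rw [ENNReal.div_le_iff ((edist_pos.2 (Ne.symm hy)).ne') (edist_ne_top x y),
    edist_dist, ← ENNReal.ofReal_mul hr]
  exact ENNReal.ofReal_le_ofReal (h y)

lemma exists_of_lt_slope (f : M → ℝ) (x : M) (r : ℝ) (hr : 0 ≤ r)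
    (h : ENNReal.ofReal r < globalSlope (fun t => (f t : EReal)) x) :
    ∃ y, y ≠ x ∧ r * dist x y < f x - f y := by
  rw [slope_coe, lt_iSup_iff] at h
  obtain ⟨y, hy⟩ := h
  rw [lt_iSup_iff] at hy
  obtain ⟨hyx, h2⟩ := hy
  have hd : (0:ℝ) < dist x y := dist_pos.2 (Ne.symm hyx)
  refine ⟨y, hyx, ?_⟩
  rw [ENNReal.lt_div_iff_mul_lt (Or.inl ((edist_pos.2 (Ne.symm hyx)).ne'))
    (Or.inl (edist_ne_top x y)), edist_dist, ← ENNReal.ofReal_mul hr] at h2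
  have : 0 ≤ r * dist x y := mul_nonneg hr dist_nonneg
  exact (ENNReal.ofReal_lt_ofReal_iff_of_nonneg this).1 h2

lemma forall_of_slope_le (g : M → ℝ) (x : M) (σ : ℝ) (hσ : 0 ≤ σ)
    (h : globalSlope (fun t => (g t : EReal)) x ≤ ENNReal.ofReal σ) :
    ∀ y, g x - g y ≤ σ * dist x y := by
  intro y
  rcases eq_or_ne y x with rfl | hy
  · simp
  · rw [slope_coe] at h
    have hp : ENNReal.ofReal (g x - g y) / edist x y ≤ ENNReal.ofReal σ :=
      le_trans (le_iSup₂ (f := fun y (_ : y ∈ {y : M | y ≠ x}) =>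
        ENNReal.ofReal (g x - g y) / edist x y) y hy) h
    have hd : (0:ℝ) < dist x y := dist_pos.2 (Ne.symm hy)
    rw [ENNReal.div_le_iff ((edist_pos.2 (Ne.symm hy)).ne') (edist_ne_top x y),
      edist_dist, ← ENNReal.ofReal_mul hσ] at hp
    exact (ENNReal.ofReal_le_ofReal_iff (mul_nonneg hσ dist_nonneg)).1 hp

lemma lt_slope_of_not_crit (f : M → ℝ) (x : M) (ε : ℝ) (hε : 0 < ε)
    (hx : ¬ ∀ y, f x - ε * dist y x ≤ f y) :
    ENNReal.ofReal ε < globalSlope (fun t => (f t : EReal)) x := by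
  push_neg at hx
  obtain ⟨y, hy⟩ := hx
  have hyx : y ≠ x := by
    rintro rfl
    rw [dist_self, mul_zero, sub_zero] at hy
    exact absurd hy (lt_irrefl _)
  have hd : (0:ℝ) < dist x y := dist_pos.2 (Ne.symm hyx)
  have h1 : ε * dist x y < f x - f y := by
    rw [dist_comm]; linarith
  have hp : ENNReal.ofReal ε < ENNReal.ofReal (f x - f y) / edist x y := by
    rw [ENNReal.lt_div_iff_mul_lt (Or.inl ((edist_pos.2 (Ne.symm hyx)).ne'))
      (Or.inl (edist_ne_top x y)), edist_dist, ← ENNReal.ofReal_mul hε.le]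
    exact (ENNReal.ofReal_lt_ofReal_iff (by nlinarith)).2 h1
  refine lt_of_lt_of_le hp ?_
  rw [slope_coe]
  exact le_iSup₂ (f := fun y (_ : y ∈ {y : M | y ≠ x}) =>
    ENNReal.ofReal (f x - f y) / edist x y) y hyx

lemma crit_char (ε : ℝ) (f : M → ℝ) (x : M) :
    x ∈ epsCrit ε (fun t => (f t : EReal)) ↔ ∀ y, f x - ε * dist y x ≤ f y := by
  simp only [epsCrit, Set.mem_setOf_eq, ne_eq, EReal.coe_ne_top, not_false_eq_true, true_and]
  constructor
  · intro h y
    have := h y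
    rw [← EReal.coe_sub, EReal.coe_le_coe_iff] at this
    exact this
  · intro h y
    rw [← EReal.coe_sub, EReal.coe_le_coe_iff]
    exact h y

lemma step_lemma (f g : M → ℝ) (Kf : NNReal) (hf : LipschitzWith Kf f)
    (hslope : ∀ x, globalSlope (fun y => (g y : EReal)) x ≤
      globalSlope (fun y => (f y : EReal)) x)
    (ε c : ℝ) (hε : 0 < ε) (hc : 0 < c) (x : M)
    (hx : ¬ ∀ y, f x - ε * dist y x ≤ f y) :
    ∃ y, y ≠ x ∧ ε * dist x y ≤ f x - f y ∧
      (c * ε / 2) * dist x y ≤ ((1 + c) * f x - g x) - ((1 + c) * f y - g y) := by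
  set S := globalSlope (fun t => (f t : EReal)) x with hS
  have hεS : ENNReal.ofReal ε < S := lt_slope_of_not_crit f x ε hε hx
  have hSle : S ≤ ENNReal.ofReal (Kf : ℝ) := by
    refine slope_le_of_forall f x _ Kf.coe_nonneg fun y => ?_
    have := hf.dist_le_mul x y
    rw [Real.dist_eq] at this
    exact le_trans (le_abs_self _) this
  have hStop : S ≠ ⊤ := ne_top_of_le_ne_top ENNReal.ofReal_ne_top hSle
  set σ := S.toReal with hσdef
  have hεσ : ε < σ := (ENNReal.ofReal_lt_iff_lt_toReal hε.le hStop).1 hεS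
  have hσ0 : 0 ≤ σ := ENNReal.toReal_nonneg
  set η := min ((σ - ε) / 2) (c * ε / (2 * (1 + c))) with hηdef
  have hη1 : η ≤ (σ - ε) / 2 := min_le_left _ _
  have hη2 : η ≤ c * ε / (2 * (1 + c)) := min_le_right _ _
  have hη : 0 < η := lt_min (by linarith) (by positivity)
  have hr : 0 ≤ σ - η := by linarith
  have hlt : ENNReal.ofReal (σ - η) < S :=
    (ENNReal.ofReal_lt_iff_lt_toReal hr hStop).2 (by linarith)
  obtain ⟨y, hyx, hy⟩ := exists_of_lt_slope f x (σ - η) hr hlt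
  have hgb : g x - g y ≤ σ * dist x y := by
    refine forall_of_slope_le g x σ hσ0 ?_ y
    have hSσ : S = ENNReal.ofReal σ := (ENNReal.ofReal_toReal hStop).symm
    exact le_trans (hslope x) hSσ.le
  have hd : (0:ℝ) < dist x y := dist_pos.2 (Ne.symm hyx)
  refine ⟨y, hyx, by nlinarith, ?_⟩
  have hη2' : (1 + c) * η ≤ c * ε / 2 := by
    calc (1 + c) * η ≤ (1 + c) * (c * ε / (2 * (1 + c))) :=
          mul_le_mul_of_nonneg_left hη2 (by linarith)
      _ = c * ε / 2 := by field_simp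
  nlinarith [mul_le_mul_of_nonneg_right hη2' hd.le, mul_le_mul_of_nonneg_right hεσ.le (mul_pos hc hd).le]

lemma ekeland_key [CompleteSpace M] (f g : M → ℝ) (Kf : NNReal) (hf : LipschitzWith Kf f)
    (Kg : NNReal) (hg : LipschitzWith Kg g)
    (hbdd : BddBelow (Set.range f))
    (hslope : ∀ x, globalSlope (fun y => (g y : EReal)) x ≤
      globalSlope (fun y => (f y : EReal)) x)
    (ε c : ℝ) (hε : 0 < ε) (hc : 0 < c) (x₀ : M) :
    ∃ z, (∀ y, f z - ε * dist y z ≤ f y) ∧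
      (1 + c) * f z - g z ≤ (1 + c) * f x₀ - g x₀ := by
  obtain ⟨B, hB⟩ := hbdd
  have hB' : ∀ t, B ≤ f t := fun t => hB (Set.mem_range_self t)
  set φ : M → ℝ := fun t => (1 + c) * f t - g t with hφ
  set R : M → M → Prop := fun a b =>
    f a + ε * dist a b ≤ f b ∧ φ a + (c * ε / 2) * dist a b ≤ φ b with hR
  have hrefl : ∀ a, R a a := fun a => by simp [hR]
  have htrans : ∀ a b d, R a b → R b d → R a d := by
    intro a b d hab hbd
    have h1 := dist_triangle a b d
    have h2 := dist_nonneg (x := a) (y := b)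
    have h3 := dist_nonneg (x := b) (y := d)
    refine ⟨?_, ?_⟩
    · nlinarith [hab.1, hbd.1]
    · nlinarith [hab.2, hbd.2, mul_pos hc hε]
  have hnon : ∀ a : M, Set.Nonempty (f '' {y | R y a}) := fun a => ⟨f a, a, hrefl a, rfl⟩
  have hbd2 : ∀ a : M, BddBelow (f '' {y | R y a}) := fun a =>
    ⟨B, by rintro _ ⟨y, -, rfl⟩; exact hB' y⟩
  have H : ∀ (n : ℕ) (a : M), ∃ b, R b a ∧ f b < sInf (f '' {y | R y a}) + (1/2)^n := by
    intro n a
    obtain ⟨v, ⟨b, hb, rfl⟩, hv⟩ :=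
      Real.lt_sInf_add_pos (hnon a) (by positivity : (0:ℝ) < (1/2)^n)
    exact ⟨b, hb, hv⟩
  choose F hF1 hF2 using H
  set x : ℕ → M := fun n => Nat.rec x₀ (fun n xn => F n xn) n with hxdef
  have hx0 : x 0 = x₀ := rfl
  have hstep : ∀ n, R (x (n+1)) (x n) := fun n => hF1 n (x n)
  have hchain : ∀ n m, n ≤ m → R (x m) (x n) := by
    intro n m hnm
    induction m, hnm using Nat.le_induction with
    | base => exact hrefl _
    | succ m hnm ih => exact htrans _ _ _ (hstep m) ih
  have hanti : ∀ n m, n ≤ m → f (x m) ≤ f (x n) := by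
    intro n m h
    have h1 := (hchain n m h).1
    have h2 := dist_nonneg (x := x m) (y := x n)
    nlinarith
  have hbdr : BddBelow (Set.range fun n => f (x n)) :=
    ⟨B, by rintro _ ⟨n, rfl⟩; exact hB' _⟩
  set L := ⨅ n, f (x n) with hL
  have htendL : Filter.Tendsto (fun n => f (x n)) Filter.atTop (𝓝 L) :=
    tendsto_atTop_ciInf (fun n m h => hanti n m h) hbdr
  have hLle : ∀ n, L ≤ f (x n) := fun n => ciInf_le hbdr n
  have hcauchy : CauchySeq x := by
    apply cauchySeq_of_le_tendsto_0 (fun N => (f (x N) - L) / ε)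
    · intro n m N hn hm
      wlog hnm : n ≤ m generalizing n m
      · rw [dist_comm]; exact this m n hm hn (le_of_not_ge hnm)
      have h1 := (hchain n m hnm).1
      have h2 := hanti N n hn
      have h3 := hLle m
      rw [dist_comm, le_div_iff₀ hε]
      nlinarith
    · have ht : Filter.Tendsto (fun N => (f (x N) - L) / ε) Filter.atTop (𝓝 ((L - L)/ε)) :=
        (htendL.sub tendsto_const_nhds).div_const ε
      simpa using ht
  obtain ⟨z, hz⟩ := cauchySeq_tendsto_of_complete hcauchy
  have hfz : Filter.Tendsto (fun n => f (x n)) Filter.atTop (𝓝 (f z)) :=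
    (hf.continuous.tendsto z).comp hz
  have hfzL : f z = L := tendsto_nhds_unique hfz htendL
  have hφc : Continuous φ :=
    (continuous_const.mul hf.continuous).sub hg.continuous
  have hkey : ∀ (ψ : M → ℝ), Continuous ψ → ∀ (k : ℝ), ∀ n,
      (∀ m, n ≤ m → ψ (x m) + k * dist (x m) (x n) ≤ ψ (x n)) →
      ψ z + k * dist z (x n) ≤ ψ (x n) := by
    intro ψ hψ k n hm
    have hψz : Filter.Tendsto (fun m => ψ (x m)) Filter.atTop (𝓝 (ψ z)) :=
      (hψ.tendsto z).comp hz
    have hdz : Filter.Tendsto (fun m => dist (x m) (x n)) Filter.atTop (𝓝 (dist z (x n))) :=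
      ((continuous_id.dist continuous_const).tendsto z).comp hz
    have htt : Filter.Tendsto (fun m => ψ (x m) + k * dist (x m) (x n)) Filter.atTop
        (𝓝 (ψ z + k * dist z (x n))) := hψz.add (hdz.const_mul k)
    exact le_of_tendsto htt (Filter.eventually_atTop.2 ⟨n, hm⟩)
  have hRz : ∀ n, R z (x n) := by
    intro n
    exact ⟨hkey f hf.continuous ε n (fun m hm => (hchain n m hm).1),
      hkey φ hφc (c * ε / 2) n (fun m hm => (hchain n m hm).2)⟩
  have hcrit : ∀ y, f z - ε * dist y z ≤ f y := by
    by_contra hx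
    obtain ⟨w, hwz, hw1, hw2⟩ := step_lemma f g Kf hf hslope ε c hε hc z hx
    have hRwz : R w z := by
      refine ⟨?_, ?_⟩
      · rw [dist_comm]; linarith
      · rw [dist_comm]; exact by linarith [hw2]
    have hRwn : ∀ n, R w (x n) := fun n => htrans _ _ _ hRwz (hRz n)
    have hfw : ∀ n, sInf (f '' {y | R y (x n)}) ≤ f w := fun n =>
      csInf_le (hbd2 _) ⟨w, hRwn n, rfl⟩
    have hlim : L ≤ f w := by
      have h1 : ∀ n : ℕ, f (x (n+1)) ≤ f w + (1/2:ℝ)^n := fun n =>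
        le_of_lt (lt_of_lt_of_le (hF2 n (x n)) (by linarith [hfw n]))
      have ht1 : Filter.Tendsto (fun n => f (x (n+1))) Filter.atTop (𝓝 L) :=
        htendL.comp (Filter.tendsto_add_atTop_nat 1)
      have ht2 : Filter.Tendsto (fun n : ℕ => f w + (1/2:ℝ)^n) Filter.atTop (𝓝 (f w + 0)) :=
        tendsto_const_nhds.add
          (tendsto_pow_atTop_nhds_zero_of_lt_one (by norm_num) (by norm_num))
      have := le_of_tendsto_of_tendsto' ht1 ht2 h1
      simpa using this
    have hd : (0:ℝ) < dist z w := dist_pos.2 (Ne.symm hwz)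
    rw [← hfzL] at hlim
    nlinarith [mul_pos hε hd]
  have h0 := (hRz 0).2
  rw [hx0] at h0
  have hd0 := dist_nonneg (x := z) (y := x₀)
  have hcε : (0:ℝ) < c * ε / 2 := by positivity
  exact ⟨z, hcrit, by nlinarith⟩

end Aux

/-- for Lipschitz `f, g : M → ℝ` on a complete metric space with `f` bounded
below and `|∇̃f| ≥ |∇̃g|` everywhere, `inf (f - g) = inf_{ε-Crit f} (f - g)` for all `ε > 0`. -/
theorem inf_sub_eq_inf_on_epsCrit_lipschitz {M : Type*} [MetricSpace M] [CompleteSpace M]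
    (f g : M → ℝ) (hf : ∃ K, LipschitzWith K f) (hg : ∃ K, LipschitzWith K g)
    (hbdd : BddBelow (Set.range f))
    (hslope : ∀ x, globalSlope (fun y => (g y : EReal)) x ≤
      globalSlope (fun y => (f y : EReal)) x) :
    ∀ ε : ℝ, 0 < ε →
      ⨅ x : M, ((f x - g x : ℝ) : EReal) =
        ⨅ x ∈ epsCrit ε (fun y => (f y : EReal)), ((f x - g x : ℝ) : EReal) := by
  intro ε hε
  obtain ⟨Kf, hfl⟩ := hf
  obtain ⟨Kg, hgl⟩ := hg
  obtain ⟨B, hB⟩ := hbdd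
  have hB' : ∀ t, B ≤ f t := fun t => hB (Set.mem_range_self t)
  refine le_antisymm (le_iInf₂ fun x hx => iInf_le _ x) ?_
  refine le_iInf fun x₀ => ?_
  by_contra h
  rw [not_le] at h
  obtain ⟨w, hw1, hw2⟩ := exists_between h
  have hwt : w ≠ ⊤ := ne_top_of_lt hw2
  have hwb : w ≠ ⊥ := ne_bot_of_gt hw1
  set r := w.toReal with hrdef
  have hwr : (r : EReal) = w := EReal.coe_toReal hwt hwb
  have hδ : 0 < r - (f x₀ - g x₀) := by
    rw [← hwr] at hw1
    rw [EReal.coe_lt_coe_iff] at hw1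
    linarith
  set δ := r - (f x₀ - g x₀) with hδdef
  set m := max (f x₀ - B) 0 with hmdef
  have hm0 : 0 ≤ m := le_max_right _ _
  set c := δ / (1 + m) with hcdef
  have hc : 0 < c := by positivity
  have hceq : c * (1 + m) = δ := by
    rw [hcdef]; field_simp
  have hcD : c * (f x₀ - B) ≤ δ := by
    have h1 : c * (f x₀ - B) ≤ c * m :=
      mul_le_mul_of_nonneg_left (le_max_left _ _) hc.le
    nlinarith
  obtain ⟨z, hz1, hz2⟩ := ekeland_key f g Kf hfl Kg hgl ⟨B, hB⟩ hslope ε c hε hc x₀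
  have hmem : z ∈ epsCrit ε (fun y => (f y : EReal)) := (crit_char ε f z).2 hz1
  have hcB : c * B ≤ c * f z := mul_le_mul_of_nonneg_left (hB' z) hc.le
  have key2 : f z - g z ≤ r := by nlinarith
  have hIle : (⨅ x ∈ epsCrit ε (fun y => (f y : EReal)), ((f x - g x : ℝ) : EReal))
      ≤ ((f z - g z : ℝ) : EReal) := iInf₂_le z hmem
  have : (⨅ x ∈ epsCrit ε (fun y => (f y : EReal)), ((f x - g x : ℝ) : EReal)) ≤ w := by
    refine le_trans hIle ?_
    rw [← hwr]
    exact EReal.coe_le_coe_iff.2 key2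
  exact absurd (lt_of_le_of_lt this hw2) (lt_irrefl _)
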